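/- Assume ζ_4 ≠ ζ_5. Then the right-hand side integrand of the pentagon equation is a single Gaussian exponential: the six-fold Berezin integral of exp(Φ_{1245} + Φ_{1345} + Φ_{2345}) over b^{(1)}_{1245}, b^{(2)}_{1245}, b^{(1)}_{1345}, b^{(2)}_{1345}, b^{(1)}_{2345}, b^{(2)}_{2345} (in this order, innermost first) equals f_{1245} · f_{1345} · f_{2345}. -/
import Mathlib


/-!  Context: a Grassmann algebra `Λ` over a field `F` of characteristic ≠ 2, with
anticommuting generators indexed by a type `ι` (for us: the (3-element) subsets
`S ⊆ Fin 5`, possibly together with extra generators `b`).  Vertex `k ∈ {1,…,5}`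
of the paper corresponds to `k - 1 : Fin 5`, so `ζ_{ij} = ζ (i-1) - ζ (j-1)`.
The Berezin integral in a generator is axiomatized by the predicate `IsBerezin`. -/

/-- The subalgebra of elements not involving the generator `e i`, i.e. the
subalgebra generated by all the other generators. -/
def notInvolving (F : Type*) [Field F] {Λ : Type*} [Ring Λ] [Algebra F Λ]
    {ι : Type*} (e : ι → Λ) (i : ι) : Subalgebra F Λ :=
  Algebra.adjoin F { x | ∃ j, j ≠ i ∧ x = e j }

/-- `B` is the Berezin integral with respect to the generator `e i`: it is `F`-linear
and, writing `x = g + h * e i` with `g`, `h` not involving `e i` (the generator moved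
to the rightmost position), one has `B x = h`.  Equivalently: `B g = 0` and
`B (h * e i) = h` for `g`, `h` not involving `e i`. -/
def IsBerezin (F : Type*) [Field F] {Λ : Type*} [Ring Λ] [Algebra F Λ]
    {ι : Type*} (e : ι → Λ) (i : ι) (B : Λ →ₗ[F] Λ) : Prop :=
  (∀ g ∈ notInvolving F e i, B g = 0) ∧
  (∀ h ∈ notInvolving F e i, B (h * e i) = h)

/-- The tetrahedron weight `f_{i₁i₂i₃i₄}` (formula (1) of the paper), where
`a S` is the Grassmann generator attached to the unoriented 2-face `S`. -/
def fw {F : Type*} [Field F] {Λ : Type*} [Ring Λ] [Algebra F Λ]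
    (ζ : Fin 5 → F) (a : Finset (Fin 5) → Λ) (i₁ i₂ i₃ i₄ : Fin 5) : Λ :=
  (ζ i₁ - ζ i₂) • (a {i₁, i₂, i₃} * a {i₁, i₂, i₄})
    - (ζ i₁ - ζ i₃) • (a {i₁, i₂, i₃} * a {i₁, i₃, i₄})
    + (ζ i₁ - ζ i₄) • (a {i₁, i₂, i₄} * a {i₁, i₃, i₄})
    + (ζ i₂ - ζ i₃) • (a {i₁, i₂, i₃} * a {i₂, i₃, i₄})
    - (ζ i₂ - ζ i₄) • (a {i₁, i₂, i₄} * a {i₂, i₃, i₄})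
    + (ζ i₃ - ζ i₄) • (a {i₁, i₃, i₄} * a {i₂, i₃, i₄})

/-- The (terminating) Taylor series of the exponential of a nilpotent element:
`exp x = Σ_{n < N} xⁿ/n!`, where `N` is any bound with `x ^ N = 0`. -/
def expT (F : Type*) [Field F] {Λ : Type*} [Ring Λ] [Algebra F Λ] (N : ℕ) (x : Λ) : Λ :=
  ∑ n ∈ Finset.range N, ((n.factorial : F))⁻¹ • x ^ n

/-- The bilinear form `Φ_{i₁i₂i₃i₄}` (formula (6) of the paper):
`Φ = b⁽¹⁾(ζ_{i₂i₃} a_{i₁i₂i₃} − ζ_{i₂i₄} a_{i₁i₂i₄} + ζ_{i₃i₄} a_{i₁i₃i₄})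
   + b⁽²⁾((ζ_{i₁i₃}/ζ_{i₃i₄}) a_{i₁i₂i₃} − (ζ_{i₁i₄}/ζ_{i₃i₄}) a_{i₁i₂i₄} + a_{i₂i₃i₄})`,
where `e (Sum.inl S) = a_S` and `e (Sum.inr b₁)`, `e (Sum.inr b₂)` are the two
extra generators `b⁽¹⁾`, `b⁽²⁾` attached to the tetrahedron. -/
def PhiT {F : Type*} [Field F] {Λ : Type*} [Ring Λ] [Algebra F Λ] {β : Type*}
    (ζ : Fin 5 → F) (e : Finset (Fin 5) ⊕ β → Λ) (b₁ b₂ : β) (i₁ i₂ i₃ i₄ : Fin 5) : Λ :=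
  e (Sum.inr b₁) *
      ((ζ i₂ - ζ i₃) • e (Sum.inl {i₁, i₂, i₃}) - (ζ i₂ - ζ i₄) • e (Sum.inl {i₁, i₂, i₄})
        + (ζ i₃ - ζ i₄) • e (Sum.inl {i₁, i₃, i₄}))
    + e (Sum.inr b₂) *
      (((ζ i₁ - ζ i₃) / (ζ i₃ - ζ i₄)) • e (Sum.inl {i₁, i₂, i₃})
        - ((ζ i₁ - ζ i₄) / (ζ i₃ - ζ i₄)) • e (Sum.inl {i₁, i₂, i₄})
        + e (Sum.inl {i₂, i₃, i₄}))


section PentagonAux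

variable {F : Type*} [Field F] {Λ : Type*} [Ring Λ] [Algebra F Λ] {ι : Type*}

lemma span_anti (e : ι → Λ) (hanti : ∀ i j, e i * e j = -(e j * e i))
    {x y : Λ} (hx : x ∈ Submodule.span F (Set.range e))
    (hy : y ∈ Submodule.span F (Set.range e)) :
    x * y = -(y * x) := by
  induction hx, hy using Submodule.span_induction₂ with
  | mem_mem a b ha hb =>
    obtain ⟨i, rfl⟩ := ha; obtain ⟨j, rfl⟩ := hb; exact hanti i j
  | zero_left y hy => simp
  | zero_right x hx => simp
  | add_left x y z hx hy hz h1 h2 => simp only [add_mul, mul_add, h1, h2, neg_add]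
  | add_right x y z hx hy hz h1 h2 => simp only [add_mul, mul_add, h1, h2, neg_add]
  | smul_left r x y hx hy h => simp only [smul_mul_assoc, mul_smul_comm, h, smul_neg]
  | smul_right r x y hx hy h => simp only [smul_mul_assoc, mul_smul_comm, h, smul_neg]

lemma span_sq (hchar : (2 : F) ≠ 0) (e : ι → Λ) (hanti : ∀ i j, e i * e j = -(e j * e i))
    {x : Λ} (hx : x ∈ Submodule.span F (Set.range e)) : x * x = 0 := by
  have h := span_anti (F := F) e hanti hx hx
  have h2 : (2 : F) • (x * x) = 0 := by
    rw [show (2:F) = 1 + 1 by norm_num, add_smul, one_smul]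
    nth_rewrite 2 [h]
    exact add_neg_cancel _
  have := congrArg (fun z => ((2:F)⁻¹) • z) h2
  simpa [smul_smul, inv_mul_cancel₀ hchar] using this

lemma ac_mul_comm' {a b c : Λ} (h1 : a * b = -(b * a)) (h2 : a * c = c * a) :
    a * (b * c) = -((b * c) * a) := by
  rw [← mul_assoc, h1, neg_mul, mul_assoc, h2, ← mul_assoc]

lemma ac_ac_comm' {a b c : Λ} (h1 : a * b = -(b * a)) (h2 : a * c = -(c * a)) :
    a * (b * c) = (b * c) * a := by
  rw [← mul_assoc, h1, neg_mul, mul_assoc, h2, mul_neg, neg_neg, ← mul_assoc]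

lemma comm_mul_comm {a y z : Λ} (h1 : a * y = y * a) (h2 : a * z = z * a) :
    a * (y * z) = (y * z) * a := by
  rw [← mul_assoc, h1, mul_assoc, h2, ← mul_assoc]

lemma even_even_comm {x y z w : Λ}
    (hxz : x * (z * w) = (z * w) * x) (hyz : y * (z * w) = (z * w) * y) :
    (x * y) * (z * w) = (z * w) * (x * y) := by
  rw [mul_assoc, hyz, ← mul_assoc, hxz, mul_assoc]

lemma prod_sq_zero {x y : Λ} (hxy : x * y = -(y * x)) (hyy : y * y = 0) :
    (x * y) * (x * y) = 0 := by
  have hyx : y * x = -(x * y) := by rw [hxy, neg_neg]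
  have h : y * (x * y) = 0 := by
    rw [← mul_assoc, hyx, neg_mul, mul_assoc, hyy, mul_zero, neg_zero]
  rw [mul_assoc, h, mul_zero]

lemma pow_formula (x y : Λ) (hc : x * y = y * x) (hxx : x * x = 0) :
    ∀ n : ℕ, (x + y) ^ (n + 1) = (n + 1) • (x * y ^ n) + y ^ (n + 1) := by
  have hcy : ∀ n : ℕ, x * y ^ n = y ^ n * x := fun n =>
    ((show Commute x y from hc).pow_right n).eq
  intro n
  induction n with
  | zero => simp
  | succ n ih =>
    rw [pow_succ, ih]
    simp only [add_mul, mul_add, smul_mul_assoc]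
    have h1 : (x * y ^ n) * x = 0 := by
      rw [mul_assoc, ← hcy n, ← mul_assoc, hxx, zero_mul]
    have h2 : (x * y ^ n) * y = x * y ^ (n + 1) := by rw [mul_assoc, ← pow_succ]
    have h3 : y ^ (n + 1) * x = x * y ^ (n + 1) := (hcy (n + 1)).symm
    rw [h1, h2, h3, smul_zero, zero_add, ← pow_succ]
    rw [succ_nsmul (x * y ^ (n + 1)) (n + 1)]
    abel

lemma nil_step (x y : Λ) (hc : x * y = y * x) (hxx : x * x = 0) {m : ℕ} (hy : y ^ m = 0) :
    (x + y) ^ (m + 1) = 0 := by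
  rw [pow_formula x y hc hxx m, hy, pow_succ, hy, zero_mul, mul_zero, smul_zero, add_zero]

lemma pow6_of_pow {y : Λ} {m : ℕ} (h : y ^ m = 0) (hm : m ≤ 6) : y ^ 6 = 0 := by
  rw [show 6 = m + (6 - m) from (Nat.add_sub_cancel' hm).symm, pow_add, h, zero_mul]

lemma expT_zero : expT F 7 (0 : Λ) = 1 := by
  simp [expT, Finset.sum_range_succ]

lemma expT_step (hfac : ∀ n < 7, (n.factorial : F) ≠ 0) (x y : Λ)
    (hc : x * y = y * x) (hxx : x * x = 0) (hy : y ^ 6 = 0) :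
    expT F 7 (x + y) = (1 + x) * expT F 7 y := by
  have h2 : (2 : F) ≠ 0 := by simpa [Nat.factorial] using hfac 2 (by norm_num)
  have h6 : (6 : F) ≠ 0 := by simpa [Nat.factorial] using hfac 3 (by norm_num)
  have h24 : (24 : F) ≠ 0 := by simpa [Nat.factorial] using hfac 4 (by norm_num)
  have h120 : (120 : F) ≠ 0 := by simpa [Nat.factorial] using hfac 5 (by norm_num)
  have h720 : (720 : F) ≠ 0 := by simpa [Nat.factorial] using hfac 6 (by norm_num)
  have p1 : (x + y) ^ 1 = (1 : ℕ) • (x * y ^ 0) + y ^ 1 := pow_formula x y hc hxx 0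
  have p2 : (x + y) ^ 2 = (2 : ℕ) • (x * y ^ 1) + y ^ 2 := pow_formula x y hc hxx 1
  have p3 : (x + y) ^ 3 = (3 : ℕ) • (x * y ^ 2) + y ^ 3 := pow_formula x y hc hxx 2
  have p4 : (x + y) ^ 4 = (4 : ℕ) • (x * y ^ 3) + y ^ 4 := pow_formula x y hc hxx 3
  have p5 : (x + y) ^ 5 = (5 : ℕ) • (x * y ^ 4) + y ^ 5 := pow_formula x y hc hxx 4
  have p6 : (x + y) ^ 6 = (6 : ℕ) • (x * y ^ 5) + y ^ 6 := pow_formula x y hc hxx 5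
  have f0 : ((Nat.factorial 0 : ℕ) : F) = 1 := by norm_num [Nat.factorial]
  have f1 : ((Nat.factorial 1 : ℕ) : F) = 1 := by norm_num [Nat.factorial]
  have f2 : ((Nat.factorial 2 : ℕ) : F) = 2 := by norm_num [Nat.factorial]
  have f3 : ((Nat.factorial 3 : ℕ) : F) = 6 := by norm_num [Nat.factorial]
  have f4 : ((Nat.factorial 4 : ℕ) : F) = 24 := by norm_num [Nat.factorial]
  have f5 : ((Nat.factorial 5 : ℕ) : F) = 120 := by norm_num [Nat.factorial]
  have f6 : ((Nat.factorial 6 : ℕ) : F) = 720 := by norm_num [Nat.factorial]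
  rw [expT, expT]
  simp only [Finset.sum_range_succ, Finset.sum_range_zero, zero_add, pow_zero]
  rw [p1, p2, p3, p4, p5, p6, hy, f0, f1, f2, f3, f4, f5, f6]
  rw [add_mul, one_mul]
  simp only [mul_add, mul_smul_comm, mul_one, mul_zero, smul_zero, add_zero, pow_zero, inv_one,
    one_smul]
  match_scalars <;> field_simp <;> norm_num

lemma mem_notInvolving (e : ι → Λ) {i j : ι} (h : j ≠ i) : e j ∈ notInvolving F e i :=
  Algebra.subset_adjoin ⟨j, h, rfl⟩

lemma berezin_pair (e : ι → Λ) {i₀ i₁ : ι}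
    (B B' : Λ →ₗ[F] Λ) (hB : IsBerezin F e i₀ B) (hB' : IsBerezin F e i₁ B')
    (P u v Q : Λ)
    (hbu : e i₀ * u = -(u * e i₀)) (hbv : e i₀ * v = -(v * e i₀))
    (hbc : e i₀ * e i₁ = -(e i₁ * e i₀)) (hcv : e i₁ * v = -(v * e i₁))
    (hbQ : e i₀ * Q = Q * e i₀) (hcQ : e i₁ * Q = Q * e i₁)
    (hP0 : P ∈ notInvolving F e i₀) (hP1 : P ∈ notInvolving F e i₁)
    (hu0 : u ∈ notInvolving F e i₀) (hu1 : u ∈ notInvolving F e i₁)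
    (hv0 : v ∈ notInvolving F e i₀) (hv1 : v ∈ notInvolving F e i₁)
    (hQ0 : Q ∈ notInvolving F e i₀) (hQ1 : Q ∈ notInvolving F e i₁)
    (hc0 : e i₁ ∈ notInvolving F e i₀) :
    B' (B (P * ((1 + e i₀ * u) * ((1 + e i₁ * v) * Q)))) = P * (u * (v * Q)) := by
  set b := e i₀ with hbdef
  set c := e i₁ with hcdef
  have hMeq : (1 + c * v) * Q = Q + c * (v * Q) := by
    rw [add_mul, one_mul, mul_assoc]
  have hbvQ : b * (v * Q) = -((v * Q) * b) := ac_mul_comm' hbv hbQ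
  have hbcvQ : b * (c * (v * Q)) = (c * (v * Q)) * b := ac_ac_comm' hbc hbvQ
  have hbM : b * ((1 + c * v) * Q) = ((1 + c * v) * Q) * b := by
    rw [hMeq, mul_add, hbQ, hbcvQ, add_mul]
  have hbuM : b * (u * ((1 + c * v) * Q)) = -((u * ((1 + c * v) * Q)) * b) :=
    ac_mul_comm' hbu hbM
  have hdecomp : P * ((1 + b * u) * ((1 + c * v) * Q)) =
      P * ((1 + c * v) * Q) + (-(P * (u * ((1 + c * v) * Q)))) * b := by
    rw [add_mul, one_mul, mul_assoc b u, hbuM]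
    simp only [mul_neg, neg_mul, mul_add, mul_assoc]
  have hM0 : (1 + c * v) * Q ∈ notInvolving F e i₀ :=
    mul_mem (add_mem (one_mem _) (mul_mem hc0 hv0)) hQ0
  have hg0 : P * ((1 + c * v) * Q) ∈ notInvolving F e i₀ := mul_mem hP0 hM0
  have hh0 : -(P * (u * ((1 + c * v) * Q))) ∈ notInvolving F e i₀ :=
    neg_mem (mul_mem hP0 (mul_mem hu0 hM0))
  have hBstep : B (P * ((1 + b * u) * ((1 + c * v) * Q))) =
      -(P * (u * ((1 + c * v) * Q))) := by
    rw [hdecomp, map_add, hB.1 _ hg0, hB.2 _ hh0, zero_add]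
  rw [hBstep]
  have hcvQ' : c * (v * Q) = -((v * Q) * c) := ac_mul_comm' hcv hcQ
  have hsplit : -(P * (u * ((1 + c * v) * Q))) =
      -(P * (u * Q)) + (P * (u * (v * Q))) * c := by
    rw [hMeq, mul_add, mul_add, neg_add, hcvQ']
    congr 1
    rw [mul_neg, mul_neg, neg_neg, ← mul_assoc u, ← mul_assoc]
  rw [hsplit, map_add]
  have hg1 : -(P * (u * Q)) ∈ notInvolving F e i₁ :=
    neg_mem (mul_mem hP1 (mul_mem hu1 hQ1))
  have hh1 : P * (u * (v * Q)) ∈ notInvolving F e i₁ :=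
    mul_mem hP1 (mul_mem hu1 (mul_mem hv1 hQ1))
  rw [hB'.1 _ hg1, hB'.2 _ hh1, zero_add]

end PentagonAux


/-- The right-hand-side integrand of the pentagon equation as a single Gaussian
exponential: the six-fold Berezin integral of `exp(Φ₁₂₄₅ + Φ₁₃₄₅ + Φ₂₃₄₅)` over
`b⁽¹⁾₁₂₄₅, b⁽²⁾₁₂₄₅, b⁽¹⁾₁₃₄₅, b⁽²⁾₁₃₄₅, b⁽¹⁾₂₃₄₅, b⁽²⁾₂₃₄₅` (in this order,
innermost first) equals `f₁₂₄₅ · f₁₃₄₅ · f₂₃₄₅`.  Here `e (Sum.inr (t, k))` is the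
generator `b⁽ᵏ⁺¹⁾` of tetrahedron `1245`/`1345`/`2345` for `t = 0`/`1`/`2`.
The exponential terminates: `(Φ₁₂₄₅ + Φ₁₃₄₅ + Φ₂₃₄₅) ^ 7 = 0`; for its Taylor
series the factorials `n!`, `n < 7`, must be invertible in `F`. -/


theorem gaussian_rhs
    {F : Type*} [Field F] {Λ : Type*} [Ring Λ] [Algebra F Λ]
    (hchar : (2 : F) ≠ 0)
    (ζ : Fin 5 → F)
    (hfac : ∀ n < 7, (n.factorial : F) ≠ 0)
    (h45 : ζ 3 ≠ ζ 4)
    (e : Finset (Fin 5) ⊕ (Fin 3 × Fin 2) → Λ)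
    (hanti : ∀ i j, e i * e j = -(e j * e i))
    (hsq : ∀ i, e i * e i = 0)
    (B00 B01 B10 B11 B20 B21 : Λ →ₗ[F] Λ)
    (hB00 : IsBerezin F e (Sum.inr (0, 0)) B00)
    (hB01 : IsBerezin F e (Sum.inr (0, 1)) B01)
    (hB10 : IsBerezin F e (Sum.inr (1, 0)) B10)
    (hB11 : IsBerezin F e (Sum.inr (1, 1)) B11)
    (hB20 : IsBerezin F e (Sum.inr (2, 0)) B20)
    (hB21 : IsBerezin F e (Sum.inr (2, 1)) B21) :
    B21 (B20 (B11 (B10 (B01 (B00 (expT F 7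
        (PhiT ζ e (0, 0) (0, 1) 0 1 3 4 + PhiT ζ e (1, 0) (1, 1) 0 2 3 4 +
          PhiT ζ e (2, 0) (2, 1) 1 2 3 4))))))) =
      fw ζ (fun S => e (Sum.inl S)) 0 1 3 4 * fw ζ (fun S => e (Sum.inl S)) 0 2 3 4 *
        fw ζ (fun S => e (Sum.inl S)) 1 2 3 4 := by
  have h45' : ζ 3 - ζ 4 ≠ 0 := sub_ne_zero.mpr h45
  have hO : ∀ j, e j ∈ Submodule.span F (Set.range e) := fun j => Submodule.subset_span ⟨j, rfl⟩
  have hac : ∀ {x y : Λ}, x ∈ Submodule.span F (Set.range e) →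
      y ∈ Submodule.span F (Set.range e) → x * y = -(y * x) :=
    fun hx hy => span_anti e hanti hx hy
  have hsqS : ∀ {x : Λ}, x ∈ Submodule.span F (Set.range e) → x * x = 0 :=
    fun hx => span_sq hchar e hanti hx
  set u0 : Λ := (ζ 1 - ζ 3) • e (Sum.inl {0,1,3}) - (ζ 1 - ζ 4) • e (Sum.inl {0,1,4})
      + (ζ 3 - ζ 4) • e (Sum.inl {0,3,4}) with hu0d
  set v0 : Λ := ((ζ 0 - ζ 3)/(ζ 3 - ζ 4)) • e (Sum.inl {0,1,3})
      - ((ζ 0 - ζ 4)/(ζ 3 - ζ 4)) • e (Sum.inl {0,1,4}) + e (Sum.inl {1,3,4}) with hv0d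
  set u1 : Λ := (ζ 2 - ζ 3) • e (Sum.inl {0,2,3}) - (ζ 2 - ζ 4) • e (Sum.inl {0,2,4})
      + (ζ 3 - ζ 4) • e (Sum.inl {0,3,4}) with hu1d
  set v1 : Λ := ((ζ 0 - ζ 3)/(ζ 3 - ζ 4)) • e (Sum.inl {0,2,3})
      - ((ζ 0 - ζ 4)/(ζ 3 - ζ 4)) • e (Sum.inl {0,2,4}) + e (Sum.inl {2,3,4}) with hv1d
  set u2 : Λ := (ζ 2 - ζ 3) • e (Sum.inl {1,2,3}) - (ζ 2 - ζ 4) • e (Sum.inl {1,2,4})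
      + (ζ 3 - ζ 4) • e (Sum.inl {1,3,4}) with hu2d
  set v2 : Λ := ((ζ 1 - ζ 3)/(ζ 3 - ζ 4)) • e (Sum.inl {1,2,3})
      - ((ζ 1 - ζ 4)/(ζ 3 - ζ 4)) • e (Sum.inl {1,2,4}) + e (Sum.inl {2,3,4}) with hv2d
  set s0 : Λ := e (Sum.inr (0,0)) * u0 with hs0d
  set s1 : Λ := e (Sum.inr (0,1)) * v0 with hs1d
  set s2 : Λ := e (Sum.inr (1,0)) * u1 with hs2d
  set s3 : Λ := e (Sum.inr (1,1)) * v1 with hs3d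
  set s4 : Λ := e (Sum.inr (2,0)) * u2 with hs4d
  set s5 : Λ := e (Sum.inr (2,1)) * v2 with hs5d
  set Q2 : Λ := (1 + s4) * ((1 + s5) * 1) with hQ2d
  set Q1 : Λ := (1 + s2) * ((1 + s3) * Q2) with hQ1d
  -- span memberships
  have hu0O : u0 ∈ Submodule.span F (Set.range e) := by
    rw [hu0d]
    exact add_mem (sub_mem (Submodule.smul_mem _ _ (hO _)) (Submodule.smul_mem _ _ (hO _)))
      (Submodule.smul_mem _ _ (hO _))
  have hv0O : v0 ∈ Submodule.span F (Set.range e) := by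
    rw [hv0d]
    exact add_mem (sub_mem (Submodule.smul_mem _ _ (hO _)) (Submodule.smul_mem _ _ (hO _))) (hO _)
  have hu1O : u1 ∈ Submodule.span F (Set.range e) := by
    rw [hu1d]
    exact add_mem (sub_mem (Submodule.smul_mem _ _ (hO _)) (Submodule.smul_mem _ _ (hO _)))
      (Submodule.smul_mem _ _ (hO _))
  have hv1O : v1 ∈ Submodule.span F (Set.range e) := by
    rw [hv1d]
    exact add_mem (sub_mem (Submodule.smul_mem _ _ (hO _)) (Submodule.smul_mem _ _ (hO _))) (hO _)
  have hu2O : u2 ∈ Submodule.span F (Set.range e) := by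
    rw [hu2d]
    exact add_mem (sub_mem (Submodule.smul_mem _ _ (hO _)) (Submodule.smul_mem _ _ (hO _)))
      (Submodule.smul_mem _ _ (hO _))
  have hv2O : v2 ∈ Submodule.span F (Set.range e) := by
    rw [hv2d]
    exact add_mem (sub_mem (Submodule.smul_mem _ _ (hO _)) (Submodule.smul_mem _ _ (hO _))) (hO _)
  -- notInvolving memberships
  have hmA : ∀ (S : Finset (Fin 5)) (t : Fin 3 × Fin 2),
      e (Sum.inl S) ∈ notInvolving F e (Sum.inr t) := fun S t => mem_notInvolving e (by simp)
  have hmB : ∀ (p q : Fin 3 × Fin 2), p ≠ q →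
      e (Sum.inr p) ∈ notInvolving F e (Sum.inr q) :=
    fun p q h => mem_notInvolving e (by simpa using h)
  have hu0m : ∀ t : Fin 3 × Fin 2, u0 ∈ notInvolving F e (Sum.inr t) := fun t => by
    rw [hu0d]
    exact add_mem (sub_mem (Subalgebra.smul_mem _ (hmA _ t) _) (Subalgebra.smul_mem _ (hmA _ t) _))
      (Subalgebra.smul_mem _ (hmA _ t) _)
  have hv0m : ∀ t : Fin 3 × Fin 2, v0 ∈ notInvolving F e (Sum.inr t) := fun t => by
    rw [hv0d]
    exact add_mem (sub_mem (Subalgebra.smul_mem _ (hmA _ t) _) (Subalgebra.smul_mem _ (hmA _ t) _))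
      (hmA _ t)
  have hu1m : ∀ t : Fin 3 × Fin 2, u1 ∈ notInvolving F e (Sum.inr t) := fun t => by
    rw [hu1d]
    exact add_mem (sub_mem (Subalgebra.smul_mem _ (hmA _ t) _) (Subalgebra.smul_mem _ (hmA _ t) _))
      (Subalgebra.smul_mem _ (hmA _ t) _)
  have hv1m : ∀ t : Fin 3 × Fin 2, v1 ∈ notInvolving F e (Sum.inr t) := fun t => by
    rw [hv1d]
    exact add_mem (sub_mem (Subalgebra.smul_mem _ (hmA _ t) _) (Subalgebra.smul_mem _ (hmA _ t) _))
      (hmA _ t)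
  have hu2m : ∀ t : Fin 3 × Fin 2, u2 ∈ notInvolving F e (Sum.inr t) := fun t => by
    rw [hu2d]
    exact add_mem (sub_mem (Subalgebra.smul_mem _ (hmA _ t) _) (Subalgebra.smul_mem _ (hmA _ t) _))
      (Subalgebra.smul_mem _ (hmA _ t) _)
  have hv2m : ∀ t : Fin 3 × Fin 2, v2 ∈ notInvolving F e (Sum.inr t) := fun t => by
    rw [hv2d]
    exact add_mem (sub_mem (Subalgebra.smul_mem _ (hmA _ t) _) (Subalgebra.smul_mem _ (hmA _ t) _))
      (hmA _ t)
  have hQ2m : ∀ t : Fin 3 × Fin 2, ((2 : Fin 3), (0 : Fin 2)) ≠ t → ((2 : Fin 3), (1 : Fin 2)) ≠ t →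
      Q2 ∈ notInvolving F e (Sum.inr t) := fun t h4 h5 => by
    rw [hQ2d]
    refine mul_mem (add_mem (one_mem _) ?_) (mul_mem (add_mem (one_mem _) ?_) (one_mem _))
    · rw [hs4d]; exact mul_mem (hmB _ _ h4) (hu2m t)
    · rw [hs5d]; exact mul_mem (hmB _ _ h5) (hv2m t)
  have hQ1m : ∀ t : Fin 3 × Fin 2, ((1 : Fin 3), (0 : Fin 2)) ≠ t → ((1 : Fin 3), (1 : Fin 2)) ≠ t →
      ((2 : Fin 3), (0 : Fin 2)) ≠ t → ((2 : Fin 3), (1 : Fin 2)) ≠ t →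
      Q1 ∈ notInvolving F e (Sum.inr t) := fun t h2 h3 h4 h5 => by
    rw [hQ1d]
    refine mul_mem (add_mem (one_mem _) ?_) (mul_mem (add_mem (one_mem _) ?_) (hQ2m t h4 h5))
    · rw [hs2d]; exact mul_mem (hmB _ _ h2) (hu1m t)
    · rw [hs3d]; exact mul_mem (hmB _ _ h3) (hv1m t)
  -- generators commute with Q1, Q2
  have hg1s : ∀ (j : Finset (Fin 5) ⊕ (Fin 3 × Fin 2)) (p : Fin 3 × Fin 2) (w : Λ),
      w ∈ Submodule.span F (Set.range e) →
      e j * (1 + e (Sum.inr p) * w) = (1 + e (Sum.inr p) * w) * e j := by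
    intro j p w hw
    rw [mul_add, add_mul, mul_one, one_mul, ac_ac_comm' (hanti j _) (hac (hO j) hw)]
  have hgQ2 : ∀ j, e j * Q2 = Q2 * e j := by
    intro j
    rw [hQ2d, hs4d, hs5d]
    exact comm_mul_comm (hg1s j _ u2 hu2O)
      (comm_mul_comm (hg1s j _ v2 hv2O) (by rw [mul_one, one_mul]))
  have hgQ1 : ∀ j, e j * Q1 = Q1 * e j := by
    intro j
    rw [hQ1d, hs2d, hs3d]
    exact comm_mul_comm (hg1s j _ u1 hu1O) (comm_mul_comm (hg1s j _ v1 hv1O) (hgQ2 j))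
  -- squares of the s_i
  have hs0sq : s0 * s0 = 0 := by rw [hs0d]; exact prod_sq_zero (hac (hO _) hu0O) (hsqS hu0O)
  have hs1sq : s1 * s1 = 0 := by rw [hs1d]; exact prod_sq_zero (hac (hO _) hv0O) (hsqS hv0O)
  have hs2sq : s2 * s2 = 0 := by rw [hs2d]; exact prod_sq_zero (hac (hO _) hu1O) (hsqS hu1O)
  have hs3sq : s3 * s3 = 0 := by rw [hs3d]; exact prod_sq_zero (hac (hO _) hv1O) (hsqS hv1O)
  have hs4sq : s4 * s4 = 0 := by rw [hs4d]; exact prod_sq_zero (hac (hO _) hu2O) (hsqS hu2O)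
  have hs5sq : s5 * s5 = 0 := by rw [hs5d]; exact prod_sq_zero (hac (hO _) hv2O) (hsqS hv2O)
  -- pairwise commutation of the s_i
  have hcss : ∀ (w x y z : Λ), w ∈ Submodule.span F (Set.range e) →
      x ∈ Submodule.span F (Set.range e) → y ∈ Submodule.span F (Set.range e) →
      z ∈ Submodule.span F (Set.range e) → (w * x) * (y * z) = (y * z) * (w * x) :=
    fun w x y z hw hx hy hz =>
      even_even_comm (ac_ac_comm' (hac hw hy) (hac hw hz)) (ac_ac_comm' (hac hx hy) (hac hx hz))
  have hc01 : s0 * s1 = s1 * s0 := by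
    rw [hs0d, hs1d]; exact hcss _ _ _ _ (hO _) hu0O (hO _) hv0O
  have hc02 : s0 * s2 = s2 * s0 := by
    rw [hs0d, hs2d]; exact hcss _ _ _ _ (hO _) hu0O (hO _) hu1O
  have hc03 : s0 * s3 = s3 * s0 := by
    rw [hs0d, hs3d]; exact hcss _ _ _ _ (hO _) hu0O (hO _) hv1O
  have hc04 : s0 * s4 = s4 * s0 := by
    rw [hs0d, hs4d]; exact hcss _ _ _ _ (hO _) hu0O (hO _) hu2O
  have hc05 : s0 * s5 = s5 * s0 := by
    rw [hs0d, hs5d]; exact hcss _ _ _ _ (hO _) hu0O (hO _) hv2O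
  have hc12 : s1 * s2 = s2 * s1 := by
    rw [hs1d, hs2d]; exact hcss _ _ _ _ (hO _) hv0O (hO _) hu1O
  have hc13 : s1 * s3 = s3 * s1 := by
    rw [hs1d, hs3d]; exact hcss _ _ _ _ (hO _) hv0O (hO _) hv1O
  have hc14 : s1 * s4 = s4 * s1 := by
    rw [hs1d, hs4d]; exact hcss _ _ _ _ (hO _) hv0O (hO _) hu2O
  have hc15 : s1 * s5 = s5 * s1 := by
    rw [hs1d, hs5d]; exact hcss _ _ _ _ (hO _) hv0O (hO _) hv2O
  have hc23 : s2 * s3 = s3 * s2 := by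
    rw [hs2d, hs3d]; exact hcss _ _ _ _ (hO _) hu1O (hO _) hv1O
  have hc24 : s2 * s4 = s4 * s2 := by
    rw [hs2d, hs4d]; exact hcss _ _ _ _ (hO _) hu1O (hO _) hu2O
  have hc25 : s2 * s5 = s5 * s2 := by
    rw [hs2d, hs5d]; exact hcss _ _ _ _ (hO _) hu1O (hO _) hv2O
  have hc34 : s3 * s4 = s4 * s3 := by
    rw [hs3d, hs4d]; exact hcss _ _ _ _ (hO _) hv1O (hO _) hu2O
  have hc35 : s3 * s5 = s5 * s3 := by
    rw [hs3d, hs5d]; exact hcss _ _ _ _ (hO _) hv1O (hO _) hv2O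
  have hc45 : s4 * s5 = s5 * s4 := by
    rw [hs4d, hs5d]; exact hcss _ _ _ _ (hO _) hu2O (hO _) hv2O
  have hct4 : s3 * (s4 + s5) = (s4 + s5) * s3 := by
    rw [mul_add, add_mul, hc34, hc35]
  have hct3 : s2 * (s3 + (s4 + s5)) = (s3 + (s4 + s5)) * s2 := by
    simp only [mul_add, add_mul, hc23, hc24, hc25]
  have hct2 : s1 * (s2 + (s3 + (s4 + s5))) = (s2 + (s3 + (s4 + s5))) * s1 := by
    simp only [mul_add, add_mul, hc12, hc13, hc14, hc15]
  have hct1 : s0 * (s1 + (s2 + (s3 + (s4 + s5)))) = (s1 + (s2 + (s3 + (s4 + s5)))) * s0 := by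
    simp only [mul_add, add_mul, hc01, hc02, hc03, hc04, hc05]
  -- nilpotency
  have hn5 : s5 ^ 2 = 0 := by rw [pow_two]; exact hs5sq
  have hn4 : (s4 + s5) ^ 3 = 0 := nil_step s4 s5 hc45 hs4sq hn5
  have hn3 : (s3 + (s4 + s5)) ^ 4 = 0 := nil_step _ _ hct4 hs3sq hn4
  have hn2 : (s2 + (s3 + (s4 + s5))) ^ 5 = 0 := nil_step _ _ hct3 hs2sq hn3
  have hn1 : (s1 + (s2 + (s3 + (s4 + s5)))) ^ 6 = 0 := nil_step _ _ hct2 hs1sq hn2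
  have hp2 : (s2 + (s3 + (s4 + s5))) ^ 6 = 0 := pow6_of_pow hn2 (by norm_num)
  have hp3 : (s3 + (s4 + s5)) ^ 6 = 0 := pow6_of_pow hn3 (by norm_num)
  have hp4 : (s4 + s5) ^ 6 = 0 := pow6_of_pow hn4 (by norm_num)
  have hp5 : s5 ^ 6 = 0 := pow6_of_pow hn5 (by norm_num)
  -- the exponential is the product of six linear factors
  have hX : PhiT ζ e (0, 0) (0, 1) 0 1 3 4 + PhiT ζ e (1, 0) (1, 1) 0 2 3 4 +
      PhiT ζ e (2, 0) (2, 1) 1 2 3 4 = s0 + (s1 + (s2 + (s3 + (s4 + s5)))) := by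
    rw [hs0d, hs1d, hs2d, hs3d, hs4d, hs5d, hu0d, hv0d, hu1d, hv1d, hu2d, hv2d]
    simp only [PhiT]
    abel
  rw [hX, expT_step hfac _ _ hct1 hs0sq hn1, expT_step hfac _ _ hct2 hs1sq hp2,
    expT_step hfac _ _ hct3 hs2sq hp3, expT_step hfac _ _ hct4 hs3sq hp4,
    expT_step hfac _ _ hc45 hs4sq hp5, show s5 = s5 + 0 from (add_zero s5).symm,
    expT_step hfac _ _ (by rw [mul_zero, zero_mul]) hs5sq (by rw [zero_pow] <;> norm_num),
    expT_zero, ← hQ2d, ← hQ1d]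
  -- first double integral
  have key0 := berezin_pair e B00 B01 hB00 hB01 1 u0 v0 Q1
    (hac (hO _) hu0O) (hac (hO _) hv0O) (hanti _ _) (hac (hO _) hv0O) (hgQ1 _) (hgQ1 _)
    (one_mem _) (one_mem _) (hu0m _) (hu0m _) (hv0m _) (hv0m _)
    (hQ1m _ (by decide) (by decide) (by decide) (by decide))
    (hQ1m _ (by decide) (by decide) (by decide) (by decide)) (hmB _ _ (by decide))
  rw [← hs0d, ← hs1d, one_mul, one_mul] at key0
  rw [key0]
  rw [show u0 * (v0 * Q1) = (u0 * v0) * ((1 + s2) * ((1 + s3) * Q2)) from by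
    rw [← mul_assoc, hQ1d]]
  -- second double integral
  have key1 := berezin_pair e B10 B11 hB10 hB11 (u0 * v0) u1 v1 Q2
    (hac (hO _) hu1O) (hac (hO _) hv1O) (hanti _ _) (hac (hO _) hv1O) (hgQ2 _) (hgQ2 _)
    (mul_mem (hu0m _) (hv0m _)) (mul_mem (hu0m _) (hv0m _)) (hu1m _) (hu1m _) (hv1m _) (hv1m _)
    (hQ2m _ (by decide) (by decide)) (hQ2m _ (by decide) (by decide)) (hmB _ _ (by decide))
  rw [← hs2d, ← hs3d] at key1
  rw [key1]
  rw [show (u0 * v0) * (u1 * (v1 * Q2)) = ((u0 * v0) * (u1 * v1)) * ((1 + s4) * ((1 + s5) * 1))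
      from by rw [← mul_assoc u1, ← mul_assoc, hQ2d]]
  -- third double integral
  have key2 := berezin_pair e B20 B21 hB20 hB21 ((u0 * v0) * (u1 * v1)) u2 v2 1
    (hac (hO _) hu2O) (hac (hO _) hv2O) (hanti _ _) (hac (hO _) hv2O)
    (by rw [mul_one, one_mul]) (by rw [mul_one, one_mul])
    (mul_mem (mul_mem (hu0m _) (hv0m _)) (mul_mem (hu1m _) (hv1m _)))
    (mul_mem (mul_mem (hu0m _) (hv0m _)) (mul_mem (hu1m _) (hv1m _)))
    (hu2m _) (hu2m _) (hv2m _) (hv2m _) (one_mem _) (one_mem _) (hmB _ _ (by decide))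
  rw [← hs4d, ← hs5d] at key2
  rw [key2, mul_one]
  -- identify each u*v with the tetrahedron weight
  have huv0 : u0 * v0 = fw ζ (fun S => e (Sum.inl S)) 0 1 3 4 := by
    rw [hu0d, hv0d]
    simp only [fw]
    simp only [add_mul, sub_mul, mul_add, mul_sub, smul_mul_assoc, mul_smul_comm, smul_smul]
    rw [show e (Sum.inl {0,1,4}) * e (Sum.inl {0,1,3})
        = -(e (Sum.inl {0,1,3}) * e (Sum.inl {0,1,4})) from hanti _ _,
      show e (Sum.inl {0,3,4}) * e (Sum.inl {0,1,3})
        = -(e (Sum.inl {0,1,3}) * e (Sum.inl {0,3,4})) from hanti _ _,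
      show e (Sum.inl {0,3,4}) * e (Sum.inl {0,1,4})
        = -(e (Sum.inl {0,1,4}) * e (Sum.inl {0,3,4})) from hanti _ _]
    simp only [hsq, smul_zero, smul_neg, zero_sub, sub_neg_eq_add]
    match_scalars <;> field_simp <;> ring
  have huv1 : u1 * v1 = fw ζ (fun S => e (Sum.inl S)) 0 2 3 4 := by
    rw [hu1d, hv1d]
    simp only [fw]
    simp only [add_mul, sub_mul, mul_add, mul_sub, smul_mul_assoc, mul_smul_comm, smul_smul]
    rw [show e (Sum.inl {0,2,4}) * e (Sum.inl {0,2,3})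
        = -(e (Sum.inl {0,2,3}) * e (Sum.inl {0,2,4})) from hanti _ _,
      show e (Sum.inl {0,3,4}) * e (Sum.inl {0,2,3})
        = -(e (Sum.inl {0,2,3}) * e (Sum.inl {0,3,4})) from hanti _ _,
      show e (Sum.inl {0,3,4}) * e (Sum.inl {0,2,4})
        = -(e (Sum.inl {0,2,4}) * e (Sum.inl {0,3,4})) from hanti _ _]
    simp only [hsq, smul_zero, smul_neg, zero_sub, sub_neg_eq_add]
    match_scalars <;> field_simp <;> ring
  have huv2 : u2 * v2 = fw ζ (fun S => e (Sum.inl S)) 1 2 3 4 := by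
    rw [hu2d, hv2d]
    simp only [fw]
    simp only [add_mul, sub_mul, mul_add, mul_sub, smul_mul_assoc, mul_smul_comm, smul_smul]
    rw [show e (Sum.inl {1,2,4}) * e (Sum.inl {1,2,3})
        = -(e (Sum.inl {1,2,3}) * e (Sum.inl {1,2,4})) from hanti _ _,
      show e (Sum.inl {1,3,4}) * e (Sum.inl {1,2,3})
        = -(e (Sum.inl {1,2,3}) * e (Sum.inl {1,3,4})) from hanti _ _,
      show e (Sum.inl {1,3,4}) * e (Sum.inl {1,2,4})
        = -(e (Sum.inl {1,2,4}) * e (Sum.inl {1,3,4})) from hanti _ _]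
    simp only [hsq, smul_zero, smul_neg, zero_sub, sub_neg_eq_add]
    match_scalars <;> field_simp <;> ring
  rw [huv0, huv1, huv2]
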